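/- Let a, c > 0, b, d ≥ 0, P_max > 0, α = d(1 + b·P_max), and define Q₁ = (Re(√((a − α)(a − α + a·c·P_max))) − α)/(a·d) (with d > 0). If Q₁ ≥ P_max, then the frontier function Φ₂: r₁ ↦ log₂(1 + c·P_max/(1 + (d/a)(1 + b·P_max)(2^{r₁} − 1))) is concave on the interval 0 ≤ r₁ ≤ log₂(1 + a·P_max/(1 + b·P_max)). -/

import Mathlib

open Real Set

theorem aux_concave (k B₁ B₂ R : ℝ) (hk : 0 < k) (hB₂ : 0 < B₂) (hB : B₂ < B₁)
    (hkey : (k * (2:ℝ) ^ R) ^ 2 ≤ B₁ * B₂) :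
    ConcaveOn ℝ (Icc (0:ℝ) R)
      (fun r : ℝ => Real.log (k * (2:ℝ) ^ r + B₁) - Real.log (k * (2:ℝ) ^ r + B₂)) := by
  have hB₁ : 0 < B₁ := hB₂.trans hB
  have ht : ∀ r : ℝ, (0:ℝ) < (2:ℝ) ^ r := fun r => Real.rpow_pos_of_pos two_pos r
  have hv₁ : ∀ r : ℝ, (0:ℝ) < k * (2:ℝ) ^ r + B₁ := fun r => by positivity
  have hv₂ : ∀ r : ℝ, (0:ℝ) < k * (2:ℝ) ^ r + B₂ := fun r => by positivity
  have hx : ∀ r : ℝ, HasDerivAt (fun r : ℝ => k * (2:ℝ) ^ r)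
      (k * ((2:ℝ) ^ r * Real.log 2)) r := fun r =>
    ((hasStrictDerivAt_const_rpow two_pos r).hasDerivAt).const_mul k
  have hF : ∀ r : ℝ, HasDerivAt
      (fun r : ℝ => Real.log (k * (2:ℝ) ^ r + B₁) - Real.log (k * (2:ℝ) ^ r + B₂))
      (k * ((2:ℝ) ^ r * Real.log 2) / (k * (2:ℝ) ^ r + B₁)
        - k * ((2:ℝ) ^ r * Real.log 2) / (k * (2:ℝ) ^ r + B₂)) r := fun r =>
    (((hx r).add_const B₁).log (hv₁ r).ne').sub (((hx r).add_const B₂).log (hv₂ r).ne')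
  have hderiv : deriv (fun r : ℝ => Real.log (k * (2:ℝ) ^ r + B₁)
      - Real.log (k * (2:ℝ) ^ r + B₂))
      = fun r : ℝ => k * ((2:ℝ) ^ r * Real.log 2) / (k * (2:ℝ) ^ r + B₁)
        - k * ((2:ℝ) ^ r * Real.log 2) / (k * (2:ℝ) ^ r + B₂) :=
    funext fun r => (hF r).deriv
  have hn : ∀ r : ℝ, HasDerivAt (fun r : ℝ => k * ((2:ℝ) ^ r * Real.log 2))
      (k * ((2:ℝ) ^ r * Real.log 2) * Real.log 2) r := by
    intro r
    have := ((hasStrictDerivAt_const_rpow two_pos r).hasDerivAt).const_mul (k * Real.log 2)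
    have e1 : (fun r : ℝ => k * ((2:ℝ) ^ r * Real.log 2)) = fun y => k * Real.log 2 * (2:ℝ) ^ y := by
      funext s; ring
    have e2 : k * ((2:ℝ) ^ r * Real.log 2) * Real.log 2 = k * Real.log 2 * ((2:ℝ) ^ r * Real.log 2) := by
      ring
    rw [e1, e2]; exact this
  have hF₁ : ∀ r : ℝ, HasDerivAt
      (fun r : ℝ => k * ((2:ℝ) ^ r * Real.log 2) / (k * (2:ℝ) ^ r + B₁)
        - k * ((2:ℝ) ^ r * Real.log 2) / (k * (2:ℝ) ^ r + B₂))
      ((k * ((2:ℝ) ^ r * Real.log 2) * Real.log 2 * (k * (2:ℝ) ^ r + B₁)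
          - k * ((2:ℝ) ^ r * Real.log 2) * (k * ((2:ℝ) ^ r * Real.log 2)))
          / (k * (2:ℝ) ^ r + B₁) ^ 2
        - (k * ((2:ℝ) ^ r * Real.log 2) * Real.log 2 * (k * (2:ℝ) ^ r + B₂)
          - k * ((2:ℝ) ^ r * Real.log 2) * (k * ((2:ℝ) ^ r * Real.log 2)))
          / (k * (2:ℝ) ^ r + B₂) ^ 2) r := fun r =>
    ((hn r).div ((hx r).add_const B₁) (hv₁ r).ne').sub
      ((hn r).div ((hx r).add_const B₂) (hv₂ r).ne')
  apply concaveOn_of_deriv2_nonpos (convex_Icc 0 R)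
  · exact (Differentiable.continuous fun r => (hF r).differentiableAt).continuousOn
  · exact fun r _ => (hF r).differentiableAt.differentiableWithinAt
  · rw [hderiv]
    exact fun r _ => (hF₁ r).differentiableAt.differentiableWithinAt
  · intro r hr
    rw [interior_Icc] at hr
    have hrR : (2:ℝ) ^ r ≤ (2:ℝ) ^ R :=
      Real.rpow_le_rpow_left_iff (by norm_num : (1:ℝ) < 2) |>.mpr hr.2.le
    have hxkey : (k * (2:ℝ) ^ r) ^ 2 ≤ B₁ * B₂ := by
      refine le_trans ?_ hkey
      exact pow_le_pow_left₀ (by positivity) (mul_le_mul_of_nonneg_left hrR hk.le) 2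
    simp only [Function.iterate_succ, Function.iterate_zero, Function.comp_apply, id_eq]
    rw [hderiv, (hF₁ r).deriv]
    have hlog2 : (0:ℝ) < Real.log 2 := Real.log_pos (by norm_num)
    rw [sub_nonpos, div_le_div_iff₀ (by positivity) (by positivity)]
    have h1 := hv₁ r
    have h2 := hv₂ r
    have h3 := ht r
    nlinarith [mul_pos h3 hlog2, sq_nonneg (Real.log 2), mul_pos hk h3,
      mul_nonneg (mul_nonneg (mul_pos (mul_pos hk h3) (mul_pos hlog2 hlog2)).le (sub_pos.mpr hB).le) (sub_nonneg.mpr hxkey)]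

theorem phi2_concave_of_Q1_ge (a b c d Pmax : ℝ) (ha : 0 < a) (hc : 0 < c)
    (hb : 0 ≤ b) (hd : 0 < d) (hP : 0 < Pmax)
    (hQ : (Real.sqrt ((a - d * (1 + b * Pmax)) *
            (a - d * (1 + b * Pmax) + a * c * Pmax)) - d * (1 + b * Pmax)) / (a * d)
          ≥ Pmax) :
    ConcaveOn ℝ (Icc (0:ℝ) (Real.logb 2 (1 + a * Pmax / (1 + b * Pmax))))
      (fun r₁ : ℝ =>
        Real.logb 2
          (1 + c * Pmax / (1 + (d / a) * (1 + b * Pmax) * ((2:ℝ) ^ r₁ - 1)))) := by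
  have h1bP : (0:ℝ) < 1 + b * Pmax := by positivity
  set α : ℝ := d * (1 + b * Pmax) with hαdef
  have hα0 : 0 < α := by positivity
  set S : ℝ := (a - α) * (a - α + a * c * Pmax) with hSdef
  have hQ' : α + a * d * Pmax ≤ Real.sqrt S := by
    rw [ge_iff_le, le_div_iff₀ (by positivity)] at hQ
    linarith
  have hαa : α < a := by
    by_contra h
    push_neg at h
    have hSle : S ≤ (a - α) ^ 2 := by
      rw [hSdef]
      nlinarith [mul_nonneg (sub_nonneg.mpr h) (mul_nonneg (mul_nonneg ha.le hc.le) hP.le)]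
    have h1 : Real.sqrt S ≤ α - a := by
      calc Real.sqrt S ≤ Real.sqrt ((a - α) ^ 2) := Real.sqrt_le_sqrt hSle
        _ = |a - α| := Real.sqrt_sq_eq_abs _
        _ = α - a := by rw [abs_of_nonpos (by linarith)]; ring
    nlinarith [mul_pos (mul_pos ha hd) hP]
  have hS : 0 < S := by
    rw [hSdef]
    have h1 : 0 < a - α := by linarith
    have h2 : 0 < a * c * Pmax := by positivity
    nlinarith
  have hsq : (α + a * d * Pmax) ^ 2 ≤ S := by
    have h1 := mul_self_le_mul_self (by positivity) hQ'
    nlinarith [Real.sq_sqrt hS.le]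
  set k : ℝ := d / a * (1 + b * Pmax) with hkdef
  have hk : 0 < k := by positivity
  have hka : k = α / a := by rw [hkdef, hαdef]; ring
  have hB₂ : 0 < 1 - k := by
    rw [hka]
    have : α / a < 1 := (div_lt_one ha).mpr hαa
    linarith
  set R : ℝ := Real.logb 2 (1 + a * Pmax / (1 + b * Pmax)) with hRdef
  have h2R : (2:ℝ) ^ R = 1 + a * Pmax / (1 + b * Pmax) :=
    Real.rpow_logb two_pos (by norm_num) (by positivity)
  have hkey : (k * (2:ℝ) ^ R) ^ 2 ≤ (1 - k + c * Pmax) * (1 - k) := by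
    have e1 : k * (2:ℝ) ^ R = (α + a * d * Pmax) / a := by
      rw [h2R, hka, hαdef]
      field_simp
    have e2 : (1 - k + c * Pmax) * (1 - k) = S / a ^ 2 := by
      rw [hka, hSdef]
      field_simp
    rw [e1, e2, div_pow]
    exact div_le_div_of_nonneg_right hsq (by positivity) |>.trans_eq rfl |>.trans
      (le_of_eq rfl) |>.trans (le_refl _) |>.trans (le_refl _)
  have haux := aux_concave k (1 - k + c * Pmax) (1 - k) R hk hB₂ (by nlinarith) hkey
  have hlog2 : (0:ℝ) < Real.log 2 := Real.log_pos (by norm_num)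
  have hsc := haux.smul (c := (Real.log 2)⁻¹) (by positivity)
  have heq : (fun r₁ : ℝ =>
        Real.logb 2
          (1 + c * Pmax / (1 + (d / a) * (1 + b * Pmax) * ((2:ℝ) ^ r₁ - 1))))
      = fun r : ℝ => (Real.log 2)⁻¹ •
          (Real.log (k * (2:ℝ) ^ r + (1 - k + c * Pmax))
            - Real.log (k * (2:ℝ) ^ r + (1 - k))) := by
    funext r
    have htr : (0:ℝ) < (2:ℝ) ^ r := Real.rpow_pos_of_pos two_pos r
    have hden : 1 + (d / a) * (1 + b * Pmax) * ((2:ℝ) ^ r - 1)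
        = k * (2:ℝ) ^ r + (1 - k) := by rw [hkdef]; ring
    have hdpos : (0:ℝ) < k * (2:ℝ) ^ r + (1 - k) := by positivity
    have hnpos : (0:ℝ) < k * (2:ℝ) ^ r + (1 - k + c * Pmax) := by positivity
    have harg : 1 + c * Pmax / (1 + (d / a) * (1 + b * Pmax) * ((2:ℝ) ^ r - 1))
        = (k * (2:ℝ) ^ r + (1 - k + c * Pmax)) / (k * (2:ℝ) ^ r + (1 - k)) := by
      rw [hden]
      field_simp
      ring
    rw [Real.logb, harg, Real.log_div hnpos.ne' hdpos.ne', smul_eq_mul, div_eq_inv_mul]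
  rw [heq]
  exact hsc
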